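/- For λ ≥ 0, the minimum value of the KLRR objective F(Z) = (1/2)‖Φ − ΦZ‖_F² + λ‖Z‖_*, attained at Z* = U D_λ Uᵀ, equals Σ_{i : σᵢ ≤ λ} σᵢ/2 + Σ_{i : σᵢ > λ} (λ − λ²/(2σᵢ)), where σ₁, …, σₙ are the eigenvalues of the Gram matrix K = ΦᵀΦ. -/

import Mathlib

open Matrix BigOperators Finset

/-- Frobenius norm of a real matrix. -/
noncomputable def frobNorm {m n : Type*} [Fintype m] [Fintype n] (A : Matrix m n ℝ) : ℝ :=
  Real.sqrt (∑ i, ∑ j, (A i j) ^ 2)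

/-- Nuclear norm of a real square matrix: the sum of its singular values,
i.e. of the square roots of the eigenvalues of `Aᴴ * A`. -/
noncomputable def nuclearNorm {n : Type*} [Fintype n] [DecidableEq n] (Z : Matrix n n ℝ) : ℝ :=
  ∑ i, Real.sqrt ((Matrix.isHermitian_conjTranspose_mul_self Z : (Zᵀ * Z).IsHermitian).eigenvalues i)

set_option linter.unusedSectionVars false
set_option maxHeartbeats 1000000

section klrrHelpers
variable {n : Type*} [Fintype n] [DecidableEq n]

/-- Cauchy–Schwarz for dot products. -/
lemma klrr_dot_le_sqrt_mul_sqrt (x y : n → ℝ) :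
    x ⬝ᵥ y ≤ Real.sqrt (x ⬝ᵥ x) * Real.sqrt (y ⬝ᵥ y) := by
  have h := Finset.sum_mul_sq_le_sq_mul_sq Finset.univ x y
  have hx : x ⬝ᵥ x = ∑ i, x i ^ 2 := by simp [dotProduct, sq]
  have hy : y ⬝ᵥ y = ∑ i, y i ^ 2 := by simp [dotProduct, sq]
  calc x ⬝ᵥ y ≤ |x ⬝ᵥ y| := le_abs_self _
    _ = Real.sqrt ((x ⬝ᵥ y) ^ 2) := (Real.sqrt_sq_eq_abs _).symm
    _ ≤ Real.sqrt ((∑ i, x i ^ 2) * ∑ i, y i ^ 2) := Real.sqrt_le_sqrt h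
    _ = Real.sqrt (x ⬝ᵥ x) * Real.sqrt (y ⬝ᵥ y) := by
        rw [hx, hy, Real.sqrt_mul (by positivity)]

lemma klrr_conj_diag_entry (P X : Matrix n n ℝ) (j : n) :
    (Pᵀ * X * P) j j = (fun a => P a j) ⬝ᵥ (X *ᵥ fun a => P a j) := by
  simp only [mul_apply, transpose_apply, dotProduct, mulVec, Finset.sum_mul, Finset.mul_sum]
  rw [Finset.sum_comm]
  exact Finset.sum_congr rfl fun a _ => Finset.sum_congr rfl fun b _ => by ring

lemma klrr_mulVec_dot_self (U : Matrix n n ℝ) (hU' : Uᵀ * U = 1) (x : n → ℝ) :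
    (U *ᵥ x) ⬝ᵥ (U *ᵥ x) = x ⬝ᵥ x := by
  rw [dotProduct_mulVec, ← mulVec_transpose, mulVec_mulVec, hU', one_mulVec]

lemma klrr_dot_self_mulVec (Z : Matrix n n ℝ) (x : n → ℝ) :
    (Z *ᵥ x) ⬝ᵥ (Z *ᵥ x) = ((Zᵀ * Z) *ᵥ x) ⬝ᵥ x := by
  rw [dotProduct_mulVec, ← mulVec_transpose, mulVec_mulVec]

/-- Real spectral data for `Zᵀ * Z`. -/
lemma klrr_spectral_real (Z : Matrix n n ℝ) :
    ∃ P : Matrix n n ℝ, Pᵀ * P = 1 ∧ P * Pᵀ = 1 ∧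
      (Zᵀ * Z) * P = P * diagonal (((Matrix.isHermitian_conjTranspose_mul_self Z : (Zᵀ * Z).IsHermitian)).eigenvalues) := by
  set hZ := (Matrix.isHermitian_conjTranspose_mul_self Z : (Zᵀ * Z).IsHermitian)
  refine ⟨(hZ.eigenvectorUnitary : Matrix n n ℝ), ?_, ?_, ?_⟩
  · have := (Matrix.mem_unitaryGroup_iff'.mp (hZ.eigenvectorUnitary).2)
    simpa [Matrix.star_eq_conjTranspose, Matrix.conjTranspose_eq_transpose_of_trivial] using this
  · have := (Matrix.mem_unitaryGroup_iff.mp (hZ.eigenvectorUnitary).2)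
    simpa [Matrix.star_eq_conjTranspose, Matrix.conjTranspose_eq_transpose_of_trivial] using this
  · have hspec := hZ.spectral_theorem
    have hP : star (hZ.eigenvectorUnitary : Matrix n n ℝ) * (hZ.eigenvectorUnitary : Matrix n n ℝ) = 1 :=
      Matrix.mem_unitaryGroup_iff'.mp (hZ.eigenvectorUnitary).2
    have key : (Zᴴ * Z) * (hZ.eigenvectorUnitary : Matrix n n ℝ)
        = (hZ.eigenvectorUnitary : Matrix n n ℝ) * diagonal (RCLike.ofReal ∘ hZ.eigenvalues) := by
      have key0 := congrArg (fun M => M * (hZ.eigenvectorUnitary : Matrix n n ℝ)) hspec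
      rw [key0, Unitary.conjStarAlgAut_apply, mul_assoc, hP, mul_one]
    have hTH : Zᵀ * Z = Zᴴ * Z := by
      rw [Matrix.conjTranspose_eq_transpose_of_trivial]
    rw [hTH]
    simpa [RCLike.ofReal_real_eq_id, Function.comp_id] using key

/-- Trace duality bound: if `G` is a contraction, `trace (G * Z) ≤ ‖Z‖_*`. -/
lemma klrr_trace_mul_le_nuclearNorm (Z G : Matrix n n ℝ)
    (hG : ∀ v : n → ℝ, (G *ᵥ v) ⬝ᵥ (G *ᵥ v) ≤ v ⬝ᵥ v) :
    trace (G * Z) ≤ nuclearNorm Z := by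
  obtain ⟨P, hPtP, hPPt, hAP⟩ := klrr_spectral_real Z
  set μ := ((Matrix.isHermitian_conjTranspose_mul_self Z : (Zᵀ * Z).IsHermitian)).eigenvalues with hμ
  have htr : trace (G * Z) = ∑ j, (Pᵀ * (G * Z) * P) j j := by
    have : trace (Pᵀ * (G * Z) * P) = trace (G * Z) := by
      rw [trace_mul_cycle, ← mul_assoc, hPPt, one_mul]
    rw [← this]; rfl
  rw [htr]
  have hnn : nuclearNorm Z = ∑ j, Real.sqrt (μ j) := rfl
  rw [hnn]
  refine Finset.sum_le_sum fun j _ => ?_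
  set u : n → ℝ := fun a => P a j with hu
  have hunit : u ⬝ᵥ u = 1 := by
    have h1 : (Pᵀ * P) j j = (1 : Matrix n n ℝ) j j := by rw [hPtP]
    simpa [mul_apply, dotProduct, hu, Matrix.one_apply] using h1
  have hZu : (Z *ᵥ u) ⬝ᵥ (Z *ᵥ u) = μ j := by
    rw [klrr_dot_self_mulVec]
    have hv : (Zᵀ * Z) *ᵥ u = fun a => P a j * μ j := by
      funext a
      have h1 : ((Zᵀ * Z) * P) a j = (P * diagonal μ) a j := by rw [hAP]
      rw [Matrix.mul_diagonal] at h1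
      simpa [mul_apply, mulVec, dotProduct, hu] using h1
    rw [hv]
    have : (fun a => P a j * μ j) ⬝ᵥ u = μ j * (u ⬝ᵥ u) := by
      simp [dotProduct, hu, Finset.mul_sum]; exact Finset.sum_congr rfl fun a _ => by ring
    rw [this, hunit, mul_one]
  calc (Pᵀ * (G * Z) * P) j j = u ⬝ᵥ ((G * Z) *ᵥ u) := klrr_conj_diag_entry P (G * Z) j
    _ = u ⬝ᵥ (G *ᵥ (Z *ᵥ u)) := by rw [← mulVec_mulVec]
    _ ≤ Real.sqrt (u ⬝ᵥ u) * Real.sqrt ((G *ᵥ (Z *ᵥ u)) ⬝ᵥ (G *ᵥ (Z *ᵥ u))) :=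
        klrr_dot_le_sqrt_mul_sqrt _ _
    _ ≤ 1 * Real.sqrt ((Z *ᵥ u) ⬝ᵥ (Z *ᵥ u)) := by
        rw [hunit, Real.sqrt_one]
        exact mul_le_mul_of_nonneg_left (Real.sqrt_le_sqrt (hG _)) zero_le_one
    _ = Real.sqrt (μ j) := by rw [one_mul, hZu]

lemma klrr_mid_cancel (A X Y B : Matrix n n ℝ) (h : X * Y = 1) :
    A * X * (Y * B) = A * B := by
  rw [Matrix.mul_assoc, ← Matrix.mul_assoc X Y B, h, Matrix.one_mul]

/-- Nuclear norm of `U * diagonal d * Uᵀ` for orthogonal `U` and nonnegative `d`. -/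
lemma klrr_nuclearNorm_conj_diagonal (U : Matrix n n ℝ) (d : n → ℝ)
    (hU : U * Uᵀ = 1) (hU' : Uᵀ * U = 1) (hd : ∀ i, 0 ≤ d i) :
    nuclearNorm (U * diagonal d * Uᵀ) = ∑ i, d i := by
  set Z := U * diagonal d * Uᵀ with hZdef
  obtain ⟨P, hPtP, hPPt, hAP⟩ := klrr_spectral_real Z
  set μ := ((Matrix.isHermitian_conjTranspose_mul_self Z : (Zᵀ * Z).IsHermitian)).eigenvalues with hμ
  have hZt : Zᵀ = Z := by
    rw [hZdef]
    simp [Matrix.transpose_mul, Matrix.diagonal_transpose, Matrix.mul_assoc]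
  have hZZ : Zᵀ * Z = U * diagonal (fun i => d i * d i) * Uᵀ := by
    rw [hZt, hZdef]
    nth_rewrite 2 [Matrix.mul_assoc U (diagonal d) Uᵀ]
    rw [klrr_mid_cancel (U * diagonal d) Uᵀ U (diagonal d * Uᵀ) hU',
      ← Matrix.mul_assoc (U * diagonal d) (diagonal d) Uᵀ,
      Matrix.mul_assoc U (diagonal d) (diagonal d), diagonal_mul_diagonal]
  set Q := Uᵀ * P with hQdef
  have hQtQ : Qᵀ * Q = 1 := by
    rw [hQdef, Matrix.transpose_mul, Matrix.transpose_transpose,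
      klrr_mid_cancel Pᵀ U Uᵀ P hU, hPtP]
  have hQQt : Q * Qᵀ = 1 := by
    rw [hQdef, Matrix.transpose_mul, Matrix.transpose_transpose,
      klrr_mid_cancel Uᵀ P Pᵀ U hPPt, hU']
  have hDQ : diagonal (fun i => d i * d i) * Q = Q * diagonal μ := by
    have h1 : U * diagonal (fun i => d i * d i) * Uᵀ * P = P * diagonal μ := by
      rw [← hZZ]; exact hAP
    have h2 := congrArg (fun M => Uᵀ * M) h1
    rw [Matrix.mul_assoc (U * diagonal (fun i => d i * d i)) Uᵀ P,
      ← Matrix.mul_assoc Uᵀ (U * diagonal (fun i => d i * d i)) (Uᵀ * P),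
      ← Matrix.mul_assoc Uᵀ U (diagonal (fun i => d i * d i)), hU', Matrix.one_mul,
      ← Matrix.mul_assoc Uᵀ P (diagonal μ)] at h2
    rw [hQdef]
    exact h2
  have hent : ∀ i j, d i * d i * Q i j = Q i j * μ j := by
    intro i j
    have h3 := congrFun (congrFun hDQ i) j
    simpa [Matrix.diagonal_mul, Matrix.mul_diagonal] using h3
  have hrow : ∀ i, ∑ j, Q i j ^ 2 = 1 := by
    intro i
    have h1 : (Q * Qᵀ) i i = (1 : Matrix n n ℝ) i i := by rw [hQQt]
    simpa [mul_apply, Matrix.one_apply, sq] using h1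
  have hcol : ∀ j, ∑ i, Q i j ^ 2 = 1 := by
    intro j
    have h1 : (Qᵀ * Q) j j = (1 : Matrix n n ℝ) j j := by rw [hQtQ]
    simpa [mul_apply, Matrix.one_apply, sq] using h1
  have hpt : ∀ i j, Q i j ^ 2 * Real.sqrt (μ j) = Q i j ^ 2 * d i := by
    intro i j
    rcases eq_or_ne (Q i j) 0 with h | h
    · simp [h]
    · have h2 : Q i j * (d i * d i) = Q i j * μ j := by
        rw [mul_comm]; exact hent i j
      have hμij : μ j = d i * d i := (mul_left_cancel₀ h h2).symm
      rw [hμij, show d i * d i = d i ^ 2 by ring, Real.sqrt_sq (hd i)]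
  calc nuclearNorm Z = ∑ j, Real.sqrt (μ j) := rfl
    _ = ∑ j, (∑ i, Q i j ^ 2) * Real.sqrt (μ j) := by
        refine Finset.sum_congr rfl fun j _ => ?_; rw [hcol j, one_mul]
    _ = ∑ j, ∑ i, Q i j ^ 2 * Real.sqrt (μ j) :=
        Finset.sum_congr rfl fun j _ => Finset.sum_mul _ _ _
    _ = ∑ j, ∑ i, Q i j ^ 2 * d i :=
        Finset.sum_congr rfl fun j _ => Finset.sum_congr rfl fun i _ => hpt i j
    _ = ∑ i, (∑ j, Q i j ^ 2) * d i := by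
        rw [Finset.sum_comm]
        exact Finset.sum_congr rfl fun i _ => (Finset.sum_mul _ _ _).symm
    _ = ∑ i, d i := by
        refine Finset.sum_congr rfl fun i _ => ?_; rw [hrow i, one_mul]

lemma klrr_frob_sq_eq_trace {m : Type*} [Fintype m] (A : Matrix m n ℝ) :
    frobNorm A ^ 2 = trace (Aᵀ * A) := by
  have h0 : frobNorm A ^ 2 = ∑ i, ∑ j, A i j ^ 2 :=
    Real.sq_sqrt (by positivity)
  rw [h0, Finset.sum_comm]
  simp only [Matrix.trace, Matrix.diag, mul_apply, transpose_apply, Finset.sum_congr]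
  exact Finset.sum_congr rfl fun j _ => Finset.sum_congr rfl fun i _ => sq (A i j) ▸ (sq (A i j)).symm ▸ by ring

lemma klrr_trace_quad (σ : n → ℝ) (M : Matrix n n ℝ) :
    trace (Mᵀ * diagonal σ * M) = ∑ j, ∑ i, σ i * (M i j) ^ 2 := by
  simp only [Matrix.trace, Matrix.diag, mul_apply, transpose_apply, Matrix.mul_diagonal]
  refine Finset.sum_congr rfl fun j _ => ?_
  refine Finset.sum_congr rfl fun i _ => ?_
  have h : ∑ x, M x j * diagonal σ x i = M i j * σ i := by
    simp [Matrix.diagonal_apply, mul_ite, mul_zero]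
  rw [h]; ring

lemma klrr_trace_conj (U : Matrix n n ℝ) (hU : U * Uᵀ = 1) (X : Matrix n n ℝ) :
    trace (Uᵀ * X * U) = trace X := by
  rw [trace_mul_cycle, hU, Matrix.one_mul]

lemma klrr_trace_conj_diag_mul (U : Matrix n n ℝ) (s : n → ℝ) (Z : Matrix n n ℝ) :
    trace ((U * diagonal s * Uᵀ) * Z) = ∑ j, s j * (Uᵀ * Z * U) j j := by
  rw [Matrix.mul_assoc (U * diagonal s) Uᵀ Z, trace_mul_comm, ← Matrix.mul_assoc,
    trace_mul_comm (Uᵀ * Z * U) (diagonal s)]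
  simp only [Matrix.trace, Matrix.diag, Matrix.diagonal_mul]

lemma klrr_conj_diag_mulVec_le (U : Matrix n n ℝ) (hU : U * Uᵀ = 1) (hU' : Uᵀ * U = 1)
    (s : n → ℝ) (hs : ∀ i, |s i| ≤ 1) (v : n → ℝ) :
    ((U * diagonal s * Uᵀ) *ᵥ v) ⬝ᵥ ((U * diagonal s * Uᵀ) *ᵥ v) ≤ v ⬝ᵥ v := by
  have h1 : (U * diagonal s * Uᵀ) *ᵥ v = U *ᵥ (diagonal s *ᵥ (Uᵀ *ᵥ v)) := by
    rw [← mulVec_mulVec, ← mulVec_mulVec]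
  rw [h1, klrr_mulVec_dot_self U hU' _]
  have hUt : (Uᵀ)ᵀ * Uᵀ = 1 := by rw [Matrix.transpose_transpose]; exact hU
  have hvv : (Uᵀ *ᵥ v) ⬝ᵥ (Uᵀ *ᵥ v) = v ⬝ᵥ v := klrr_mulVec_dot_self Uᵀ hUt v
  set w := Uᵀ *ᵥ v with hw
  have hdv : diagonal s *ᵥ w = fun i => s i * w i := by
    funext i; exact mulVec_diagonal s w i
  rw [hdv, ← hvv]
  simp only [dotProduct]
  refine Finset.sum_le_sum fun i _ => ?_
  have h := abs_le.mp (hs i)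
  nlinarith [mul_nonneg (mul_nonneg (sub_nonneg.2 h.2) (by linarith [h.1] : (0:ℝ) ≤ 1 + s i))
    (mul_self_nonneg (w i))]

end klrrHelpers


/-- For `λ ≥ 0`, the minimum value of the KLRR objective, attained at
`Z* = U D_λ Uᵀ`, equals `Σ_{σᵢ ≤ λ} σᵢ/2 + Σ_{σᵢ > λ} (λ − λ²/(2σᵢ))`. -/
theorem klrr_minimum_value {d n : ℕ}
    (Φ : Matrix (Fin d) (Fin n) ℝ) (lam : ℝ) (hlam : 0 ≤ lam)
    (U : Matrix (Fin n) (Fin n) ℝ) (σ : Fin n → ℝ)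
    (hU : U * Uᵀ = 1) (hU' : Uᵀ * U = 1) (hσ : ∀ i, 0 ≤ σ i)
    (hK : Φᵀ * Φ = U * Matrix.diagonal σ * Uᵀ)
    (Zstar : Matrix (Fin n) (Fin n) ℝ)
    (hZstar : Zstar =
      U * Matrix.diagonal (fun i => if lam < σ i then 1 - lam / σ i else 0) * Uᵀ) :
    (∀ Z : Matrix (Fin n) (Fin n) ℝ,
      (1 / 2) * (frobNorm (Φ - Φ * Zstar)) ^ 2 + lam * nuclearNorm Zstar
        ≤ (1 / 2) * (frobNorm (Φ - Φ * Z)) ^ 2 + lam * nuclearNorm Z) ∧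
    (1 / 2) * (frobNorm (Φ - Φ * Zstar)) ^ 2 + lam * nuclearNorm Zstar
      = (∑ i ∈ Finset.univ.filter (fun i => σ i ≤ lam), σ i / 2)
        + ∑ i ∈ Finset.univ.filter (fun i => lam < σ i), (lam - lam ^ 2 / (2 * σ i)) := by
  set dl : Fin n → ℝ := fun i => if lam < σ i then 1 - lam / σ i else 0 with hdl
  set val : Fin n → ℝ := fun j => if lam < σ j then lam - lam ^ 2 / (2 * σ j) else σ j / 2
    with hval
  have hdnn : ∀ i, 0 ≤ dl i := by
    intro i
    simp only [hdl]
    split_ifs with h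
    · have hσpos : 0 < σ i := lt_of_le_of_lt hlam h
      have h2 : lam / σ i ≤ 1 := (div_le_one hσpos).mpr h.le
      linarith
    · exact le_refl 0
  have hnucZ : nuclearNorm Zstar = ∑ i, dl i := by
    rw [hZstar]
    exact klrr_nuclearNorm_conj_diagonal U dl hU hU' hdnn
  have hfrob : ∀ Z : Matrix (Fin n) (Fin n) ℝ,
      frobNorm (Φ - Φ * Z) ^ 2 = ∑ j, ∑ i, σ i * ((Uᵀ * (1 - Z) * U) i j) ^ 2 := by
    intro Z
    have hA : Φ - Φ * Z = Φ * (1 - Z) := by rw [Matrix.mul_sub, Matrix.mul_one]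
    have hmat2 : (Φ * (1 - Z))ᵀ * (Φ * (1 - Z)) = (1 - Z)ᵀ * (Φᵀ * Φ) * (1 - Z) := by
      simp only [Matrix.transpose_mul, Matrix.mul_assoc]
    have hmat : (Uᵀ * (1 - Z) * U)ᵀ * diagonal σ * (Uᵀ * (1 - Z) * U)
        = Uᵀ * ((1 - Z)ᵀ * (U * diagonal σ * Uᵀ) * (1 - Z)) * U := by
      simp only [Matrix.transpose_mul, Matrix.transpose_transpose, Matrix.mul_assoc]
    rw [hA, klrr_frob_sq_eq_trace, hmat2, hK, ← klrr_trace_quad σ (Uᵀ * (1 - Z) * U), hmat,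
      klrr_trace_conj U hU]
  have hMstar : Uᵀ * (1 - Zstar) * U = diagonal (fun i => 1 - dl i) := by
    have hmid : Uᵀ * (U * diagonal dl * Uᵀ) * U = diagonal dl := by
      rw [← Matrix.mul_assoc Uᵀ (U * diagonal dl) Uᵀ, ← Matrix.mul_assoc Uᵀ U (diagonal dl),
        hU', Matrix.one_mul, Matrix.mul_assoc, hU', Matrix.mul_one]
    rw [hZstar, Matrix.mul_sub, Matrix.mul_one, Matrix.sub_mul, hU', hmid]
    ext i j
    by_cases h : i = j
    · subst h; simp [Matrix.diagonal_apply_eq, Matrix.one_apply_eq, Matrix.sub_apply]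
    · simp [Matrix.diagonal_apply_ne _ h, Matrix.one_apply_ne h, Matrix.sub_apply]
  have hcj : ∀ j, ∑ i, σ i * ((diagonal (fun i => 1 - dl i)) i j) ^ 2
      = σ j * (1 - dl j) ^ 2 := by
    intro j
    rw [Finset.sum_eq_single j]
    · rw [Matrix.diagonal_apply_eq]
    · intro i _ hij
      rw [Matrix.diagonal_apply_ne _ hij]
      ring
    · intro h; exact absurd (Finset.mem_univ j) h
  have hvalstar : (1 / 2) * (frobNorm (Φ - Φ * Zstar)) ^ 2 + lam * nuclearNorm Zstar
      = ∑ j, val j := by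
    rw [hfrob Zstar, hMstar, hnucZ,
      show (∑ j, ∑ i, σ i * ((diagonal (fun i => 1 - dl i)) i j) ^ 2)
        = ∑ j, σ j * (1 - dl j) ^ 2 from Finset.sum_congr rfl fun j _ => hcj j,
      Finset.mul_sum, Finset.mul_sum, ← Finset.sum_add_distrib]
    refine Finset.sum_congr rfl fun j _ => ?_
    simp only [hdl, hval]
    split_ifs with h
    · have hσpos : 0 < σ j := lt_of_le_of_lt hlam h
      have hne : σ j ≠ 0 := ne_of_gt hσpos
      field_simp
      ring
    · ring
  have hRHS : ∑ j, val j
      = (∑ i ∈ Finset.univ.filter (fun i => σ i ≤ lam), σ i / 2)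
        + ∑ i ∈ Finset.univ.filter (fun i => lam < σ i), (lam - lam ^ 2 / (2 * σ i)) := by
    rw [← Finset.sum_filter_add_sum_filter_not Finset.univ (fun j => σ j ≤ lam) val]
    congr 1
    · refine Finset.sum_congr rfl fun j hj => ?_
      have h := (Finset.mem_filter.mp hj).2
      simp only [hval]
      rw [if_neg (not_lt.mpr h)]
    · rw [show Finset.univ.filter (fun j => ¬ σ j ≤ lam)
          = Finset.univ.filter (fun j => lam < σ j) from by ext j; simp [not_le]]
      refine Finset.sum_congr rfl fun j hj => ?_
      have h := (Finset.mem_filter.mp hj).2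
      simp only [hval]
      rw [if_pos h]
  set s : Fin n → ℝ := fun j => if lam < σ j then 1 else σ j / lam with hs
  have hsabs : ∀ j, |s j| ≤ 1 := by
    intro j
    simp only [hs]
    split_ifs with h
    · simp
    · rcases eq_or_lt_of_le hlam with h0 | h0
      · rw [← h0]; simp
      · have h1 : 0 ≤ σ j / lam := div_nonneg (hσ j) hlam
        have h2 : σ j / lam ≤ 1 := (div_le_one h0).mpr (not_lt.mp h)
        rw [abs_of_nonneg h1]; exact h2
  have hlamS : ∀ j, ¬ lam < σ j → lam * s j = σ j := by
    intro j h
    simp only [hs]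
    rw [if_neg h]
    rcases eq_or_lt_of_le hlam with h0 | h0
    · have hσ0 : σ j = 0 := le_antisymm (h0 ▸ not_lt.mp h) (hσ j)
      rw [← h0, hσ0]; simp
    · rw [mul_comm, div_mul_cancel₀ _ h0.ne']
  have hs1 : ∀ j, lam < σ j → s j = 1 := by
    intro j h
    simp only [hs]
    rw [if_pos h]
  have hGle : ∀ Z : Matrix (Fin n) (Fin n) ℝ,
      trace ((U * diagonal s * Uᵀ) * Z) ≤ nuclearNorm Z := fun Z =>
    klrr_trace_mul_le_nuclearNorm Z _ (fun v => klrr_conj_diag_mulVec_le U hU hU' s hsabs v)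
  have hM1 : ∀ Z : Matrix (Fin n) (Fin n) ℝ, Uᵀ * Z * U = 1 - Uᵀ * (1 - Z) * U := by
    intro Z
    rw [Matrix.mul_sub, Matrix.mul_one, Matrix.sub_mul, hU', sub_sub_cancel]
  have hlb : ∀ Z : Matrix (Fin n) (Fin n) ℝ,
      ∑ j, val j ≤ (1 / 2) * (frobNorm (Φ - Φ * Z)) ^ 2 + lam * nuclearNorm Z := by
    intro Z
    set M := Uᵀ * (1 - Z) * U with hMdef
    have htrG : trace ((U * diagonal s * Uᵀ) * Z) = ∑ j, s j * (1 - M j j) := by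
      rw [klrr_trace_conj_diag_mul U s Z]
      refine Finset.sum_congr rfl fun j _ => ?_
      rw [hM1 Z]
      simp [Matrix.sub_apply, Matrix.one_apply_eq]
      exact Or.inl rfl
    calc ∑ j, val j
        ≤ ∑ j, ((1 / 2) * (∑ i, σ i * (M i j) ^ 2) + lam * (s j * (1 - M j j))) := by
          refine Finset.sum_le_sum fun j _ => ?_
          have hdiag : σ j * (M j j) ^ 2 ≤ ∑ i, σ i * (M i j) ^ 2 :=
            Finset.single_le_sum (f := fun i => σ i * (M i j) ^ 2)
              (fun i _ => mul_nonneg (hσ i) (sq_nonneg _)) (Finset.mem_univ j)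
          have hineq : val j ≤ (1 / 2) * (σ j * (M j j) ^ 2) + lam * (s j * (1 - M j j)) := by
            simp only [hval]
            split_ifs with h
            · have hσpos : 0 < σ j := lt_of_le_of_lt hlam h
              have h2σ : (0:ℝ) < 2 * σ j := by linarith
              have hdiv : lam ^ 2 / (2 * σ j) * (2 * σ j) = lam ^ 2 :=
                div_mul_cancel₀ _ (ne_of_gt h2σ)
              rw [hs1 j h, one_mul]
              nlinarith [sq_nonneg (σ j * M j j - lam), h2σ, hdiv]
            · have hexp : lam * (s j * (1 - M j j)) = σ j * (1 - M j j) := by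
                rw [← mul_assoc, hlamS j h]
              rw [hexp]
              nlinarith [sq_nonneg (M j j - 1), hσ j]
          linarith [mul_le_mul_of_nonneg_left hdiag (by norm_num : (0:ℝ) ≤ 1 / 2)]
      _ = (1 / 2) * (∑ j, ∑ i, σ i * (M i j) ^ 2) + lam * (∑ j, s j * (1 - M j j)) := by
          rw [Finset.sum_add_distrib, ← Finset.mul_sum, ← Finset.mul_sum]
      _ ≤ (1 / 2) * (∑ j, ∑ i, σ i * (M i j) ^ 2) + lam * nuclearNorm Z := by
          have h1 := hGle Z
          rw [htrG] at h1
          have h2 := mul_le_mul_of_nonneg_left h1 hlam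
          linarith
      _ = (1 / 2) * (frobNorm (Φ - Φ * Z)) ^ 2 + lam * nuclearNorm Z := by
          rw [hfrob Z]
  refine ⟨fun Z => ?_, ?_⟩
  · rw [hvalstar]; exact hlb Z
  · rw [hvalstar]; exact hRHS
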